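/- Let 𝒳 be a fundamental minimal system for 𝕏 and K ≥ 1. Suppose the dual system 𝒳* is bounded (sup_n ‖x_n*‖ < ∞) and that for each f in the linear span ⟨𝒳⟩ there exist n(f) ∈ ℕ and δ(f) > 0 such that ‖f‖ ≤ K‖f + g‖ for every g in the linear span of 𝒳_{>n(f)} with ‖g‖_∞ < δ(f). Then for each f ∈ ⟨𝒳⟩ there is m(f) ∈ ℕ such that ‖f‖ ≤ K‖f + g‖ for every g in the linear span of 𝒳_{>m(f)}; consequently ⟨𝒳*⟩ is a K⁻¹-norming subspace of 𝕏*. -/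

import Mathlib

open Set Submodule Finset

open Set Submodule Finset

section Aux
variable {𝕜 : Type*} [RCLike 𝕜] {X : Type*} [NormedAddCommGroup X] [NormedSpace 𝕜 X]

lemma tail_coeff_zero' (x : ℕ → X) (xs : ℕ → X →L[𝕜] 𝕜)
    (hbi : ∀ n k, xs n (x k) = if n = k then 1 else 0)
    {m j : ℕ} (hj : j ≤ m) {g : X} (hg : g ∈ Submodule.span 𝕜 (x '' {k | m < k})) :
    xs j g = 0 := by
  have hle : Submodule.span 𝕜 (x '' {k | m < k}) ≤ LinearMap.ker (xs j : X →ₗ[𝕜] 𝕜) := by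
    rw [Submodule.span_le]
    rintro - ⟨k, hk, rfl⟩
    simp only [SetLike.mem_coe, LinearMap.mem_ker, ContinuousLinearMap.coe_coe]
    rw [hbi]
    have : j ≠ k := by simp only [Set.mem_setOf_eq] at hk; omega
    simp [this]
  exact LinearMap.mem_ker.mp (hle hg)

lemma fin_support' (x : ℕ → X) (xs : ℕ → X →L[𝕜] 𝕜)
    (hbi : ∀ n k, xs n (x k) = if n = k then 1 else 0)
    {g : X} (hg : g ∈ Submodule.span 𝕜 (Set.range x)) :
    ∃ B : ℕ, ∀ j, B ≤ j → xs j g = 0 := by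
  induction hg using Submodule.span_induction with
  | mem v hv =>
      obtain ⟨k, rfl⟩ := hv
      exact ⟨k + 1, fun j hj => by rw [hbi, if_neg (by omega : j ≠ k)]⟩
  | zero => exact ⟨0, fun j _ => map_zero _⟩
  | add u v _ _ hu hv =>
      obtain ⟨B1, h1⟩ := hu; obtain ⟨B2, h2⟩ := hv
      exact ⟨max B1 B2, fun j hj => by
        rw [map_add, h1 j (le_of_max_le_left hj), h2 j (le_of_max_le_right hj), add_zero]⟩
  | smul c v _ hv =>
      obtain ⟨B, h1⟩ := hv
      exact ⟨B, fun j hj => by rw [map_smul, h1 j hj, smul_zero]⟩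

end Aux

section P1
variable {𝕜 : Type*} [RCLike 𝕜] {X : Type*} [NormedAddCommGroup X] [NormedSpace 𝕜 X]

lemma part_one' (x : ℕ → X) (xs : ℕ → X →L[𝕜] 𝕜)
    (hbi : ∀ n k, xs n (x k) = if n = k then 1 else 0)
    (K : ℝ) (hK : 1 ≤ K) (M : ℝ) (hM : ∀ n, ‖xs n‖ ≤ M)
    (f : X) (n : ℕ) (δ : ℝ) (hδ : 0 < δ)
    (hfg : ∀ g ∈ Submodule.span 𝕜 (x '' {k | n < k}),
      (⨆ i, ‖xs i g‖) < δ → ‖f‖ ≤ K * ‖f + g‖) :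
    ∃ m : ℕ, ∀ g ∈ Submodule.span 𝕜 (x '' {k | m < k}), ‖f‖ ≤ K * ‖f + g‖ := by
  by_contra hbad
  push_neg at hbad
  choose G hGmem hGlt using hbad
  have hK0 : (0:ℝ) < K := lt_of_lt_of_le one_pos hK
  have hM0 : (0:ℝ) ≤ M := le_trans (norm_nonneg (xs 0)) (hM 0)
  have hGn : ∀ m, ‖G m‖ ≤ (1 + K⁻¹) * ‖f‖ := by
    intro m
    have h1 : ‖f + G m‖ < K⁻¹ * ‖f‖ := by
      have := hGlt m
      rw [lt_inv_mul_iff₀ hK0]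
      linarith [hGlt m]
    have h2 : ‖G m‖ ≤ ‖f + G m‖ + ‖f‖ := by
      have := norm_add_le (f + G m) (-f)
      simpa [add_assoc] using this
    nlinarith
  set C : ℝ := M * ((1 + K⁻¹) * ‖f‖) with hC
  have hC0 : 0 ≤ C := by
    have : (0:ℝ) ≤ (1 + K⁻¹) * ‖f‖ := le_trans (norm_nonneg (G 0)) (hGn 0)
    positivity
  have hcoeffC : ∀ m j, ‖xs j (G m)‖ ≤ C := by
    intro m j
    calc ‖xs j (G m)‖ ≤ ‖xs j‖ * ‖G m‖ := (xs j).le_opNorm _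
    _ ≤ M * ((1 + K⁻¹) * ‖f‖) :=
        mul_le_mul (hM j) (hGn m) (norm_nonneg _) hM0
  have hBex : ∀ m : ℕ, ∃ B : ℕ, ∀ j, B ≤ j → xs j (G m) = 0 := fun m =>
    fin_support' x xs hbi (Submodule.span_mono (Set.image_subset_range x _) (hGmem m))
  choose B hB using hBex
  set ms : ℕ → ℕ := fun i => Nat.rec n (fun _ p => max (B p) p + 1) i with hms
  have hms0 : ms 0 = n := rfl
  have hmss : ∀ i, ms (i + 1) = max (B (ms i)) (ms i) + 1 := fun i => rfl
  have hmono : StrictMono ms := strictMono_nat_of_lt_succ (fun i => by rw [hmss]; omega)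
  have hmsn : ∀ i, n ≤ ms i := fun i => by
    have := hmono.monotone (Nat.zero_le i); omega
  have hsupp : ∀ i j, xs j (G (ms i)) ≠ 0 → ms i < j ∧ j < ms (i + 1) := by
    intro i j hne
    constructor
    · by_contra hle
      exact hne (tail_coeff_zero' x xs hbi (by omega) (hGmem (ms i)))
    · by_contra hge
      have : B (ms i) ≤ j := by rw [hmss] at hge; omega
      exact hne (hB (ms i) j this)
  have hdisj : ∀ j i i', i ≠ i' → xs j (G (ms i)) ≠ 0 → xs j (G (ms i')) = 0 := by
    intro j i i' hne h1
    by_contra h2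
    obtain ⟨ha1, ha2⟩ := hsupp i j h1
    obtain ⟨hb1, hb2⟩ := hsupp i' j h2
    rcases lt_or_gt_of_ne hne with hlt | hlt
    · have := hmono.monotone (show i + 1 ≤ i' by omega); omega
    · have := hmono.monotone (show i' + 1 ≤ i by omega); omega
  obtain ⟨N, hN⟩ := exists_nat_gt (C / δ)
  have hNpos : 0 < N := by
    by_contra hc
    have h0 : N = 0 := by omega
    rw [h0] at hN
    simp only [Nat.cast_zero] at hN
    linarith [div_nonneg hC0 hδ.le]
  have hNR : (0:ℝ) < N := by exact_mod_cast hNpos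
  set S : X := ∑ i ∈ Finset.range N, G (ms i) with hSdef
  set g : X := ((N : 𝕜))⁻¹ • S with hgdef
  have hNne : ((N : 𝕜)) ≠ 0 := Nat.cast_ne_zero.mpr hNpos.ne'
  have hgmem : g ∈ Submodule.span 𝕜 (x '' {k | n < k}) := by
    refine Submodule.smul_mem _ _ (Submodule.sum_mem _ (fun i _ => ?_))
    refine Submodule.span_mono (Set.image_mono ?_) (hGmem (ms i))
    intro k hk
    simp only [Set.mem_setOf_eq] at hk ⊢
    exact lt_of_le_of_lt (hmsn i) hk
  have hnormNinv : ‖((N : 𝕜))⁻¹‖ = (N : ℝ)⁻¹ := by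
    rw [norm_inv, RCLike.norm_natCast]
  have hcoeff : ∀ j, ‖xs j g‖ ≤ C / N := by
    intro j
    have hxsS : ‖xs j S‖ ≤ C := by
      rw [hSdef, map_sum]
      by_cases hex : ∃ i ∈ Finset.range N, xs j (G (ms i)) ≠ 0
      · obtain ⟨i₀, hi₀, hne₀⟩ := hex
        rw [Finset.sum_eq_single_of_mem i₀ hi₀ (fun i _ hne => hdisj j i₀ i (Ne.symm hne) hne₀)]
        exact hcoeffC (ms i₀) j
      · push_neg at hex
        rw [Finset.sum_eq_zero hex]
        simpa using hC0
    have : xs j g = ((N : 𝕜))⁻¹ * xs j S := by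
      rw [hgdef, map_smul, smul_eq_mul]
    rw [this, norm_mul, hnormNinv]
    rw [div_eq_inv_mul]
    exact mul_le_mul_of_nonneg_left hxsS (by positivity)
  have hsup : (⨆ i, ‖xs i g‖) < δ := by
    have h1 : (⨆ i, ‖xs i g‖) ≤ C / N := ciSup_le hcoeff
    have h2 : C / N < δ := by
      rw [div_lt_iff₀ hNR]
      have := (div_lt_iff₀ hδ).mp hN
      linarith
    linarith
  have hkey : ‖f‖ ≤ K * ‖f + g‖ := hfg g hgmem hsup
  have hfgsum : f + g = ((N : 𝕜))⁻¹ • ∑ i ∈ Finset.range N, (f + G (ms i)) := by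
    rw [Finset.sum_add_distrib, Finset.sum_const, Finset.card_range, smul_add,
      ← Nat.cast_smul_eq_nsmul 𝕜 N f, inv_smul_smul₀ hNne, ← hSdef, ← hgdef]
  have hterm : ∀ i, ‖f + G (ms i)‖ < K⁻¹ * ‖f‖ := by
    intro i
    rw [lt_inv_mul_iff₀ hK0]
    linarith [hGlt (ms i)]
  have hlt : ‖f + g‖ < K⁻¹ * ‖f‖ := by
    calc ‖f + g‖ = (N : ℝ)⁻¹ * ‖∑ i ∈ Finset.range N, (f + G (ms i))‖ := by
          rw [hfgsum, norm_smul, hnormNinv]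
    _ ≤ (N : ℝ)⁻¹ * ∑ i ∈ Finset.range N, ‖f + G (ms i)‖ :=
        mul_le_mul_of_nonneg_left (norm_sum_le _ _) (by positivity)
    _ < (N : ℝ)⁻¹ * ∑ i ∈ Finset.range N, K⁻¹ * ‖f‖ := by
        refine mul_lt_mul_of_pos_left ?_ (by positivity)
        exact Finset.sum_lt_sum_of_nonempty (Finset.nonempty_range_iff.mpr hNpos.ne')
          (fun i _ => hterm i)
    _ = K⁻¹ * ‖f‖ := by
        rw [Finset.sum_const, Finset.card_range, nsmul_eq_mul, ← mul_assoc,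
          inv_mul_cancel₀ hNR.ne', one_mul]
  have : ‖f‖ < ‖f‖ := by
    calc ‖f‖ ≤ K * ‖f + g‖ := hkey
    _ < K * (K⁻¹ * ‖f‖) := mul_lt_mul_of_pos_left hlt hK0
    _ = ‖f‖ := by rw [← mul_assoc, mul_inv_cancel₀ hK0.ne', one_mul]
  exact lt_irrefl _ this

end P1


section P2
variable {𝕜 : Type*} [RCLike 𝕜] {X : Type*} [NormedAddCommGroup X] [NormedSpace 𝕜 X]

lemma part_two' (x : ℕ → X) (xs : ℕ → X →L[𝕜] 𝕜)
    (hdense : Dense (Submodule.span 𝕜 (Set.range x) : Set X))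
    (hbi : ∀ n k, xs n (x k) = if n = k then 1 else 0)
    (K : ℝ) (hK : 1 ≤ K)
    (P1 : ∀ f ∈ Submodule.span 𝕜 (Set.range x), ∃ m : ℕ,
      ∀ g ∈ Submodule.span 𝕜 (x '' {n | m < n}), ‖f‖ ≤ K * ‖f + g‖)
    (f : X) :
    K⁻¹ * ‖f‖ ≤
      sSup {r : ℝ | ∃ g ∈ Submodule.span 𝕜 (Set.range xs), ‖g‖ ≤ 1 ∧ r = ‖g f‖} := by
  have hK0 : (0:ℝ) < K := lt_of_lt_of_le one_pos hK
  have hKi1 : K⁻¹ ≤ 1 := by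
    rw [inv_le_one_iff₀]; right; exact hK
  set T : X → Set ℝ :=
    fun v => {r : ℝ | ∃ g ∈ Submodule.span 𝕜 (Set.range xs), ‖g‖ ≤ 1 ∧ r = ‖g v‖} with hT
  have hT0 : ∀ v, (0:ℝ) ∈ T v := by
    intro v
    exact ⟨0, Submodule.zero_mem _, by simp, by simp⟩
  have hTb : ∀ v, BddAbove (T v) := by
    intro v
    refine ⟨‖v‖, ?_⟩
    rintro r ⟨g, -, hg1, rfl⟩
    calc ‖g v‖ ≤ ‖g‖ * ‖v‖ := g.le_opNorm v
    _ ≤ 1 * ‖v‖ := mul_le_mul_of_nonneg_right hg1 (norm_nonneg v)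
    _ = ‖v‖ := one_mul _
  have hTnn : ∀ v, 0 ≤ sSup (T v) := fun v => le_csSup (hTb v) (hT0 v)
  refine le_of_forall_pos_le_add (fun ε hε => ?_)
  obtain ⟨f', hf'mem, hdist⟩ :=
    Metric.mem_closure_iff.mp (hdense f) (ε / 2) (half_pos hε)
  rw [dist_eq_norm] at hdist
  obtain ⟨m, hm⟩ := P1 f' hf'mem
  set Y : Submodule 𝕜 X := (Submodule.span 𝕜 (x '' {k | m < k})).topologicalClosure with hY
  haveI hYc : IsClosed (Y : Set X) := Submodule.isClosed_topologicalClosure _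
  have hYle : ∀ y ∈ Y, ‖f'‖ ≤ K * ‖f' + y‖ := by
    intro y hy
    have hsub : (Y : Set X) ⊆ {v : X | ‖f'‖ ≤ K * ‖f' + v‖} := by
      rw [hY, Submodule.topologicalClosure_coe]
      refine closure_minimal (fun v hv => hm v hv) ?_
      exact isClosed_le continuous_const (by fun_prop)
    exact hsub hy
  have hquot : ‖f'‖ ≤ K * ‖(Submodule.Quotient.mk f' : X ⧸ Y)‖ := by
    refine le_of_forall_pos_le_add (fun η hη => ?_)
    obtain ⟨a, ha, halt⟩ :=
      Submodule.Quotient.norm_mk_lt (Submodule.Quotient.mk f' : X ⧸ Y)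
        (div_pos hη hK0)
    have hmem : a - f' ∈ Y := (Submodule.Quotient.eq Y).mp ha
    have h1 : ‖f'‖ ≤ K * ‖a‖ := by
      have := hYle (a - f') hmem
      simpa [add_sub_cancel] using this
    calc ‖f'‖ ≤ K * ‖a‖ := h1
    _ ≤ K * (‖(Submodule.Quotient.mk f' : X ⧸ Y)‖ + η / K) :=
        mul_le_mul_of_nonneg_left halt.le hK0.le
    _ = K * ‖(Submodule.Quotient.mk f' : X ⧸ Y)‖ + η := by
        field_simp
  by_cases hf'0 : f' = 0
  · have hfsmall : ‖f‖ < ε / 2 := by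
      rw [hf'0] at hdist; simpa using hdist
    have : K⁻¹ * ‖f‖ ≤ ‖f‖ :=
      mul_le_of_le_one_left (norm_nonneg f) hKi1
    have h2 := hTnn f
    show K⁻¹ * ‖f‖ ≤ sSup (T f) + ε
    linarith
  · have hmkne : (Submodule.Quotient.mk f' : X ⧸ Y) ≠ 0 := by
      intro h0
      apply hf'0
      have : ‖f'‖ ≤ 0 := by
        have := hquot; rw [h0, norm_zero, mul_zero] at this; exact this
      exact norm_eq_zero.mp (le_antisymm this (norm_nonneg f'))
    obtain ⟨G, hG1, hGf⟩ := exists_dual_vector 𝕜 (Submodule.Quotient.mk f' : X ⧸ Y) (norm_ne_zero_iff.mpr hmkne)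
    set mkC : X →L[𝕜] (X ⧸ Y) :=
      LinearMap.mkContinuous Y.mkQ 1 (fun v => by
        simpa [one_mul] using Submodule.Quotient.norm_mk_le Y v) with hmkC
    have hmkCnorm : ‖mkC‖ ≤ 1 := LinearMap.mkContinuous_norm_le _ zero_le_one _
    have hmkCapp : ∀ v : X, mkC v = Submodule.Quotient.mk v := fun v => rfl
    set φ : X →L[𝕜] 𝕜 := G.comp mkC with hφ
    have hφnorm : ‖φ‖ ≤ 1 := by
      calc ‖φ‖ ≤ ‖G‖ * ‖mkC‖ := ContinuousLinearMap.opNorm_comp_le _ _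
      _ ≤ 1 * 1 := mul_le_mul (le_of_eq hG1) hmkCnorm (ContinuousLinearMap.opNorm_nonneg _) zero_le_one
      _ = 1 := one_mul 1
    have hφf' : ‖φ f'‖ = ‖(Submodule.Quotient.mk f' : X ⧸ Y)‖ := by
      have : φ f' = ((‖(Submodule.Quotient.mk f' : X ⧸ Y)‖ : ℝ) : 𝕜) := by
        rw [hφ, ContinuousLinearMap.comp_apply, hmkCapp, hGf]
      rw [this, RCLike.norm_ofReal, abs_of_nonneg (norm_nonneg _)]
    have hφlow : K⁻¹ * ‖f'‖ ≤ ‖φ f'‖ := by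
      rw [hφf', inv_mul_le_iff₀ hK0]
      exact hquot
    -- φ is a finite combination of the xs
    set ψ : X →L[𝕜] 𝕜 := ∑ k ∈ Finset.range (m + 1), φ (x k) • xs k with hψ
    have hφψ : φ = ψ := by
      have hcont1 : Continuous (⇑φ) := φ.continuous
      have hcont2 : Continuous (⇑ψ) := ψ.continuous
      have heq : (⇑φ) = (⇑ψ) := by
        refine Continuous.ext_on hdense hcont1 hcont2 ?_
        intro v hv
        replace hv : v ∈ Submodule.span 𝕜 (Set.range x) := hv
        induction hv using Submodule.span_induction with
        | mem w hw =>
            obtain ⟨j, rfl⟩ := hw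
            have hψval : ψ (x j) =
                if j ∈ Finset.range (m + 1) then φ (x j) else 0 := by
              rw [hψ, ContinuousLinearMap.sum_apply]
              have : ∀ k, (φ (x k) • xs k) (x j) =
                  if k = j then φ (x k) else 0 := by
                intro k
                rw [ContinuousLinearMap.smul_apply, hbi, smul_eq_mul, mul_ite,
                  mul_one, mul_zero]
              simp_rw [this]
              rw [Finset.sum_ite_eq' (Finset.range (m + 1)) j (fun k => φ (x k))]
            by_cases hj : j ≤ m
            · rw [hψval, if_pos (Finset.mem_range.mpr (by omega))]
            · have hxjY : x j ∈ Y := by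
                refine Submodule.le_topologicalClosure _ ?_
                exact Submodule.subset_span ⟨j, by simp only [Set.mem_setOf_eq]; omega, rfl⟩
              have hφ0 : φ (x j) = 0 := by
                rw [hφ, ContinuousLinearMap.comp_apply, hmkCapp,
                  (Submodule.Quotient.mk_eq_zero Y).mpr hxjY, map_zero]
              rw [hφ0, hψval, if_neg (by simp; omega)]
        | zero => rw [map_zero, map_zero]
        | add u w _ _ hu hw => rw [map_add, map_add, hu, hw]
        | smul c u _ hu => rw [map_smul, map_smul, hu]
      exact ContinuousLinearMap.ext (fun v => congrFun heq v)
    have hφmem : φ ∈ Submodule.span 𝕜 (Set.range xs) := by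
      rw [hφψ, hψ]
      exact Submodule.sum_mem _ (fun k _ =>
        Submodule.smul_mem _ _ (Submodule.subset_span ⟨k, rfl⟩))
    have hrin : ‖φ f‖ ∈ T f := ⟨φ, hφmem, hφnorm, rfl⟩
    have hle : ‖φ f‖ ≤ sSup (T f) := le_csSup (hTb f) hrin
    have hnear : ‖φ f'‖ ≤ ‖φ f‖ + ‖f - f'‖ := by
      calc ‖φ f'‖ = ‖φ f + φ (f' - f)‖ := by
            rw [← map_add, show f + (f' - f) = f' by abel]
      _ ≤ ‖φ f‖ + ‖φ (f' - f)‖ := norm_add_le _ _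
      _ ≤ ‖φ f‖ + ‖f - f'‖ := by
          have h1 : ‖φ (f' - f)‖ ≤ ‖φ‖ * ‖f' - f‖ := φ.le_opNorm _
          have h2 : ‖φ‖ * ‖f' - f‖ ≤ 1 * ‖f' - f‖ :=
            mul_le_mul_of_nonneg_right hφnorm (norm_nonneg _)
          have h3 : ‖f' - f‖ = ‖f - f'‖ := norm_sub_rev _ _
          linarith
    have hnf : ‖f‖ ≤ ‖f'‖ + ‖f - f'‖ := by
      calc ‖f‖ = ‖f' + (f - f')‖ := by rw [show f' + (f - f') = f by abel]
      _ ≤ ‖f'‖ + ‖f - f'‖ := norm_add_le _ _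
    have hmul : K⁻¹ * ‖f‖ ≤ K⁻¹ * ‖f'‖ + K⁻¹ * ‖f - f'‖ := by
      have := mul_le_mul_of_nonneg_left hnf (inv_nonneg.mpr hK0.le)
      linarith [this, mul_add K⁻¹ (‖f'‖) (‖f - f'‖)]
    have hsmall : K⁻¹ * ‖f - f'‖ ≤ ‖f - f'‖ :=
      mul_le_of_le_one_left (norm_nonneg _) hKi1
    show K⁻¹ * ‖f‖ ≤ sSup (T f) + ε
    linarith
end P2


/-- If `𝒳*` is bounded and for each `f` in the span of `𝒳` there are `n(f)` and
`δ(f) > 0` with `‖f‖ ≤ K‖f + g‖` for every `g` in the span of `𝒳_{>n(f)}` with `‖g‖_∞ < δ(f)`,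
then for each `f` in the span of `𝒳` there is `m(f)` with `‖f‖ ≤ K‖f + g‖` for every `g` in the
span of `𝒳_{>m(f)}`; consequently `⟨𝒳*⟩` is a `K⁻¹`-norming subspace of `𝕏*`. -/
theorem bounded_dual_small_coefficient_tail_estimate
    {𝕜 : Type*} [RCLike 𝕜] {X : Type*} [NormedAddCommGroup X] [NormedSpace 𝕜 X]
    [CompleteSpace X] [TopologicalSpace.SeparableSpace X]
    (hinf : ¬ FiniteDimensional 𝕜 X)
    (x : ℕ → X) (xs : ℕ → X →L[𝕜] 𝕜)
    (hdense : Dense (Submodule.span 𝕜 (Set.range x) : Set X))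
    (hbi : ∀ n k, xs n (x k) = if n = k then 1 else 0)
    (K : ℝ) (hK : 1 ≤ K)
    (hxsb : ∃ M : ℝ, ∀ n, ‖xs n‖ ≤ M)
    (h : ∀ f ∈ Submodule.span 𝕜 (Set.range x), ∃ (n : ℕ) (δ : ℝ), 0 < δ ∧
      ∀ g ∈ Submodule.span 𝕜 (x '' {k | n < k}),
        (⨆ i, ‖xs i g‖) < δ → ‖f‖ ≤ K * ‖f + g‖) :
    (∀ f ∈ Submodule.span 𝕜 (Set.range x), ∃ m : ℕ,
      ∀ g ∈ Submodule.span 𝕜 (x '' {n | m < n}), ‖f‖ ≤ K * ‖f + g‖) ∧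
    (∀ f : X, K⁻¹ * ‖f‖ ≤
      sSup {r : ℝ | ∃ g ∈ Submodule.span 𝕜 (Set.range xs), ‖g‖ ≤ 1 ∧ r = ‖g f‖}) := by
  obtain ⟨M, hM⟩ := hxsb
  have P1 : ∀ f ∈ Submodule.span 𝕜 (Set.range x), ∃ m : ℕ,
      ∀ g ∈ Submodule.span 𝕜 (x '' {n | m < n}), ‖f‖ ≤ K * ‖f + g‖ := by
    intro f hf
    obtain ⟨n, δ, hδ, hfg⟩ := h f hf
    exact part_one' x xs hbi K hK M hM f n δ hδ hfg
  exact ⟨P1, fun f => part_two' x xs hdense hbi K hK P1 f⟩
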